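/- Theorem (Theorem 3, case 3, the mixture model). Suppose p_aa = p_ba (equivalently p_bb = p_ab), so that π_a = p_aa and π_b = p_bb and the observations X_1, X_2, … are i.i.d. with density π_a f_a + π_b f_b. If π_a ≥ π_b, then almost surely the set {u ≥ 1 : X_u is a strong a-node of (X_1,…,X_u)} is infinite; if π_b ≥ π_a, then almost surely there are infinitely many strong b-nodes. -/

import Mathlib

open MeasureTheory

namespace TwoStateHMM

/-- Parameters of a two-state hidden Markov model: strictly positive transition
probabilities `paa, pab, pba, pbb` with row sums one, the (unique) stationary initial
distribution `(pia, pib)`, and emission densities `fa, fb` with respect to a σ-finite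
measure `lam` on `ℝ^d`, such that the emission distributions differ. -/
structure HMMParams (d : ℕ) where
  paa : ℝ
  pab : ℝ
  pba : ℝ
  pbb : ℝ
  pia : ℝ
  pib : ℝ
  fa : (Fin d → ℝ) → ℝ
  fb : (Fin d → ℝ) → ℝ
  lam : Measure (Fin d → ℝ)
  paa_pos : 0 < paa
  pab_pos : 0 < pab
  pba_pos : 0 < pba
  pbb_pos : 0 < pbb
  rowa : paa + pab = 1
  rowb : pba + pbb = 1
  pia_pos : 0 < pia
  pib_pos : 0 < pib
  pi_sum : pia + pib = 1
  pi_stat : pia = pia * paa + pib * pba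
  fa_nonneg : ∀ x, 0 ≤ fa x
  fb_nonneg : ∀ x, 0 ≤ fb x
  fa_meas : Measurable fa
  fb_meas : Measurable fb
  lam_sigmaFinite : SigmaFinite lam
  fa_int : ∫ x, fa x ∂lam = 1
  fb_int : ∫ x, fb x ∂lam = 1
  emis_ne : 0 < lam {x | fa x ≠ fb x}

variable {d : ℕ}

/-- Viterbi scores: `delta P x u = (δ_{u+1}(a), δ_{u+1}(b))` of the sequence
`x_1 = x 0, x_2 = x 1, …` (0-indexed time `u` corresponds to the `(u+1)`-th observation). -/
noncomputable def delta (P : HMMParams d) (x : ℕ → (Fin d → ℝ)) : ℕ → ℝ × ℝ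
  | 0 => (P.pia * P.fa (x 0), P.pib * P.fb (x 0))
  | u + 1 =>
      (max ((delta P x u).1 * P.paa) ((delta P x u).2 * P.pba) * P.fa (x (u + 1)),
       max ((delta P x u).1 * P.pab) ((delta P x u).2 * P.pbb) * P.fb (x (u + 1)))

/-- `x u` (the `(u+1)`-th observation) is a strong `a`-node:
`δ(a)·p_aa > δ(b)·p_ba` and `δ(a)·p_ab > δ(b)·p_bb`. -/
def StrongANode (P : HMMParams d) (x : ℕ → (Fin d → ℝ)) (u : ℕ) : Prop :=
  (delta P x u).2 * P.pba < (delta P x u).1 * P.paa ∧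
  (delta P x u).2 * P.pbb < (delta P x u).1 * P.pab

/-- Strong `b`-node. -/
def StrongBNode (P : HMMParams d) (x : ℕ → (Fin d → ℝ)) (u : ℕ) : Prop :=
  (delta P x u).1 * P.paa < (delta P x u).2 * P.pba ∧
  (delta P x u).1 * P.pab < (delta P x u).2 * P.pbb

/-- Strong node: strong `a`-node or strong `b`-node. -/
def StrongNode (P : HMMParams d) (x : ℕ → (Fin d → ℝ)) (u : ℕ) : Prop :=
  StrongANode P x u ∨ StrongBNode P x u

/-- Weak (not necessarily strong) `a`-node. -/
def WeakANode (P : HMMParams d) (x : ℕ → (Fin d → ℝ)) (u : ℕ) : Prop :=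
  (delta P x u).2 * P.pba ≤ (delta P x u).1 * P.paa ∧
  (delta P x u).2 * P.pbb ≤ (delta P x u).1 * P.pab

/-- Weak (not necessarily strong) `b`-node. -/
def WeakBNode (P : HMMParams d) (x : ℕ → (Fin d → ℝ)) (u : ℕ) : Prop :=
  (delta P x u).1 * P.paa ≤ (delta P x u).2 * P.pba ∧
  (delta P x u).1 * P.pab ≤ (delta P x u).2 * P.pbb

/-- Weak node: weak `a`-node or weak `b`-node. -/
def WeakNode (P : HMMParams d) (x : ℕ → (Fin d → ℝ)) (u : ℕ) : Prop :=
  WeakANode P x u ∨ WeakBNode P x u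

/-- The sequence obtained by appending the block `z` after the first `m` elements of `x`. -/
def concatSeq (m : ℕ) (x z : ℕ → (Fin d → ℝ)) : ℕ → (Fin d → ℝ) :=
  fun i => if i < m then x i else z (i - m)

/-- The block `z 0, …, z (k-1)` is a strong barrier: appended to any prefix, it
contains a strong node. -/
def IsStrongBarrier (P : HMMParams d) (k : ℕ) (z : ℕ → (Fin d → ℝ)) : Prop :=
  ∀ (m : ℕ) (x : ℕ → (Fin d → ℝ)),
    ∃ u, m ≤ u ∧ u < m + k ∧ StrongNode P (concatSeq m x z) u

/-- The block `z 0, …, z (k-1)` is a strong `a`-barrier. -/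
def IsStrongABarrier (P : HMMParams d) (k : ℕ) (z : ℕ → (Fin d → ℝ)) : Prop :=
  ∀ (m : ℕ) (x : ℕ → (Fin d → ℝ)),
    ∃ u, m ≤ u ∧ u < m + k ∧ StrongANode P (concatSeq m x z) u

/-- The block `z 0, …, z (k-1)` is a strong `b`-barrier. -/
def IsStrongBBarrier (P : HMMParams d) (k : ℕ) (z : ℕ → (Fin d → ℝ)) : Prop :=
  ∀ (m : ℕ) (x : ℕ → (Fin d → ℝ)),
    ∃ u, m ≤ u ∧ u < m + k ∧ StrongBNode P (concatSeq m x z) u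

/-- Initial probabilities indexed by the hidden state (`true = a`, `false = b`). -/
def HMMParams.initP (P : HMMParams d) : Bool → ℝ := fun s => if s then P.pia else P.pib

/-- Transition probabilities indexed by the hidden states (`true = a`, `false = b`). -/
def HMMParams.transP (P : HMMParams d) : Bool → Bool → ℝ := fun s t =>
  if s then (if t then P.paa else P.pab) else (if t then P.pba else P.pbb)

/-- Emission densities indexed by the hidden state. -/
def HMMParams.dens (P : HMMParams d) : Bool → (Fin d → ℝ) → ℝ := fun s =>
  if s then P.fa else P.fb

/-- Emission distributions `P_a = f_a·λ`, `P_b = f_b·λ`. -/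
noncomputable def HMMParams.emis (P : HMMParams d) : Bool → Measure (Fin d → ℝ) := fun s =>
  P.lam.withDensity fun x => ENNReal.ofReal (P.dens s x)

/-- The likelihood `Λ_π(y_{1:n+1}; x_{1:n+1})` of the hidden path `y` of length `n+1`. -/
noncomputable def likelihood (P : HMMParams d) (n : ℕ) (y : Fin (n + 1) → Bool)
    (x : ℕ → (Fin d → ℝ)) : ℝ :=
  P.initP (y 0) * (∏ i : Fin n, P.transP (y i.castSucc) (y i.succ)) *
    ∏ i : Fin (n + 1), P.dens (y i) (x i)

/-- `(Y, X)` is (a version of) the two-state HMM with parameters `P` on the probability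
space `(Ω, μ)`: the finite-dimensional joint distributions are those of a stationary
Markov chain `Y` with the given transition probabilities, together with observations
`X` that are conditionally independent given `Y`, `X_i` having distribution `P_{Y_i}`. -/
def IsHMM (P : HMMParams d) {Ω : Type} [MeasurableSpace Ω] (μ : Measure Ω)
    (Y : ℕ → Ω → Bool) (X : ℕ → Ω → (Fin d → ℝ)) : Prop :=
  IsProbabilityMeasure μ ∧ (∀ i, Measurable (Y i)) ∧ (∀ i, Measurable (X i)) ∧
  ∀ (n : ℕ) (y : Fin (n + 1) → Bool) (A : Fin (n + 1) → Set (Fin d → ℝ)),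
    (∀ i, MeasurableSet (A i)) →
    μ {ω | ∀ i : Fin (n + 1), Y i ω = y i ∧ X i ω ∈ A i} =
      ENNReal.ofReal (P.initP (y 0) * ∏ i : Fin n, P.transP (y i.castSucc) (y i.succ)) *
        ∏ i : Fin (n + 1), P.emis (y i) (A i)


section Aux

lemma pia_eq (P : HMMParams d) (hcase : P.paa = P.pba) : P.pia = P.paa := by
  have h := P.pi_stat
  rw [← hcase] at h
  calc P.pia = (P.pia + P.pib) * P.paa := by rw [add_mul]; exact h
    _ = P.paa := by rw [P.pi_sum, one_mul]

lemma pib_eq (P : HMMParams d) (hcase : P.paa = P.pba) : P.pib = P.pbb := by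
  have h1 := pia_eq P hcase
  have h2 := P.rowb
  have h3 := P.pi_sum
  linarith

lemma pab_eq (P : HMMParams d) (hcase : P.paa = P.pba) : P.pab = P.pbb := by
  have h2 := P.rowa
  have h3 := P.rowb
  linarith

lemma delta_repr (P : HMMParams d) (hcase : P.paa = P.pba) (x : ℕ → (Fin d → ℝ))
    (hx : ∀ v, 0 < P.fa (x v) ∨ 0 < P.fb (x v)) (u : ℕ) :
    ∃ c : ℝ, 0 < c ∧
      delta P x u = (c * (P.pia * P.fa (x u)), c * (P.pib * P.fb (x u))) := by
  induction u with
  | zero => exact ⟨1, one_pos, by simp [delta]⟩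
  | succ u ih =>
    obtain ⟨c, hc, hrep⟩ := ih
    have hM : 0 < max (delta P x u).1 (delta P x u).2 := by
      rw [hrep]
      rcases hx u with h | h
      · exact lt_max_of_lt_left (mul_pos hc (mul_pos P.pia_pos h))
      · exact lt_max_of_lt_right (mul_pos hc (mul_pos P.pib_pos h))
    refine ⟨max (delta P x u).1 (delta P x u).2, hM, ?_⟩
    have hpa := pia_eq P hcase
    have hpb := pib_eq P hcase
    have h1 : max ((delta P x u).1 * P.paa) ((delta P x u).2 * P.pba)
        = max (delta P x u).1 (delta P x u).2 * P.paa := by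
      rw [← hcase, max_mul_of_nonneg _ _ P.paa_pos.le]
    have h2 : max ((delta P x u).1 * P.pab) ((delta P x u).2 * P.pbb)
        = max (delta P x u).1 (delta P x u).2 * P.pbb := by
      rw [pab_eq P hcase, max_mul_of_nonneg _ _ P.pbb_pos.le]
    show (max ((delta P x u).1 * P.paa) ((delta P x u).2 * P.pba) * P.fa (x (u + 1)),
        max ((delta P x u).1 * P.pab) ((delta P x u).2 * P.pbb) * P.fb (x (u + 1))) = _
    rw [h1, h2, hpa, hpb, Prod.mk.injEq]
    constructor <;> ring

lemma strongA_iff (P : HMMParams d) (hcase : P.paa = P.pba) (x : ℕ → (Fin d → ℝ))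
    (hx : ∀ v, 0 < P.fa (x v) ∨ 0 < P.fb (x v)) (u : ℕ) :
    StrongANode P x u ↔ P.pib * P.fb (x u) < P.pia * P.fa (x u) := by
  obtain ⟨c, hc, hrep⟩ := delta_repr P hcase x hx u
  unfold StrongANode
  rw [hrep]
  simp only
  constructor
  · rintro ⟨h1, -⟩
    rw [← hcase] at h1
    exact lt_of_mul_lt_mul_left (lt_of_mul_lt_mul_right h1 P.paa_pos.le) hc.le
  · intro h
    refine ⟨?_, ?_⟩
    · rw [← hcase]
      exact mul_lt_mul_of_pos_right (mul_lt_mul_of_pos_left h hc) P.paa_pos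
    · rw [pab_eq P hcase]
      exact mul_lt_mul_of_pos_right (mul_lt_mul_of_pos_left h hc) P.pbb_pos

lemma strongB_iff (P : HMMParams d) (hcase : P.paa = P.pba) (x : ℕ → (Fin d → ℝ))
    (hx : ∀ v, 0 < P.fa (x v) ∨ 0 < P.fb (x v)) (u : ℕ) :
    StrongBNode P x u ↔ P.pia * P.fa (x u) < P.pib * P.fb (x u) := by
  obtain ⟨c, hc, hrep⟩ := delta_repr P hcase x hx u
  unfold StrongBNode
  rw [hrep]
  simp only
  constructor
  · rintro ⟨h1, -⟩
    rw [← hcase] at h1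
    exact lt_of_mul_lt_mul_left (lt_of_mul_lt_mul_right h1 P.paa_pos.le) hc.le
  · intro h
    refine ⟨?_, ?_⟩
    · rw [← hcase]
      exact mul_lt_mul_of_pos_right (mul_lt_mul_of_pos_left h hc) P.paa_pos
    · rw [pab_eq P hcase]
      exact mul_lt_mul_of_pos_right (mul_lt_mul_of_pos_left h hc) P.pbb_pos

end Aux


section MeasureAux

lemma fa_integrable (P : HMMParams d) : Integrable P.fa P.lam := by
  by_contra h
  have := P.fa_int
  rw [integral_undef h] at this
  exact zero_ne_one this

lemma fb_integrable (P : HMMParams d) : Integrable P.fb P.lam := by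
  by_contra h
  have := P.fb_int
  rw [integral_undef h] at this
  exact zero_ne_one this

lemma emis_univ (P : HMMParams d) (s : Bool) : P.emis s Set.univ = 1 := by
  cases s
  · show P.lam.withDensity (fun x => ENNReal.ofReal (P.fb x)) Set.univ = 1
    rw [withDensity_apply _ MeasurableSet.univ, setLIntegral_univ,
      ← ofReal_integral_eq_lintegral_ofReal (fb_integrable P) (ae_of_all _ P.fb_nonneg),
      P.fb_int, ENNReal.ofReal_one]
  · show P.lam.withDensity (fun x => ENNReal.ofReal (P.fa x)) Set.univ = 1
    rw [withDensity_apply _ MeasurableSet.univ, setLIntegral_univ,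
      ← ofReal_integral_eq_lintegral_ofReal (fa_integrable P) (ae_of_all _ P.fa_nonneg),
      P.fa_int, ENNReal.ofReal_one]

/-- The mixture law of each observation. -/
noncomputable def nu (P : HMMParams d) : Measure (Fin d → ℝ) :=
  ENNReal.ofReal P.pia • P.emis true + ENNReal.ofReal P.pib • P.emis false

lemma nu_apply (P : HMMParams d) (A : Set (Fin d → ℝ)) :
    nu P A = ENNReal.ofReal P.pia * P.emis true A + ENNReal.ofReal P.pib * P.emis false A := by
  simp [nu, Measure.add_apply, Measure.smul_apply, smul_eq_mul]

lemma nu_univ (P : HMMParams d) : nu P Set.univ = 1 := by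
  rw [nu_apply, emis_univ, emis_univ, mul_one, mul_one,
    ← ENNReal.ofReal_add P.pia_pos.le P.pib_pos.le, P.pi_sum, ENNReal.ofReal_one]

lemma initP_nonneg (P : HMMParams d) (s : Bool) : 0 ≤ P.initP s := by
  cases s
  · exact P.pib_pos.le
  · exact P.pia_pos.le

lemma prefix_formula (P : HMMParams d) {Ω : Type} [MeasurableSpace Ω]
    {μ : Measure Ω} {Y : ℕ → Ω → Bool} {X : ℕ → Ω → (Fin d → ℝ)}
    (hHMM : IsHMM P μ Y X) (hcase : P.paa = P.pba) (n : ℕ)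
    (A : Fin (n + 1) → Set (Fin d → ℝ)) (hA : ∀ i, MeasurableSet (A i)) :
    μ {ω | ∀ i : Fin (n + 1), X i ω ∈ A i} = ∏ i : Fin (n + 1), nu P (A i) := by
  obtain ⟨hprob, hY, hX, hfdd⟩ := hHMM
  have htrans : ∀ s t, P.transP s t = P.initP t := by
    have h1 := pia_eq P hcase
    have h2 := pib_eq P hcase
    have h3 := pab_eq P hcase
    intro s t
    cases s <;> cases t <;>
      simp only [HMMParams.transP, HMMParams.initP, if_true, if_false, Bool.false_eq_true] <;>
      linarith [hcase]
  have hmeas : ∀ y : Fin (n + 1) → Bool,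
      MeasurableSet {ω | ∀ i : Fin (n + 1), Y i ω = y i ∧ X i ω ∈ A i} := by
    intro y
    have : {ω | ∀ i : Fin (n + 1), Y i ω = y i ∧ X i ω ∈ A i}
        = ⋂ i : Fin (n + 1), ((Y i) ⁻¹' {y i} ∩ (X i) ⁻¹' (A i)) := by
      ext ω
      simp [Set.mem_iInter, Set.mem_preimage, forall_and]
    rw [this]
    exact MeasurableSet.iInter fun i =>
      ((hY i) (measurableSet_singleton _)).inter ((hX i) (hA i))
  have hset : {ω | ∀ i : Fin (n + 1), X i ω ∈ A i}
      = ⋃ y : Fin (n + 1) → Bool, {ω | ∀ i : Fin (n + 1), Y i ω = y i ∧ X i ω ∈ A i} := by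
    ext ω
    simp only [Set.mem_setOf_eq, Set.mem_iUnion]
    constructor
    · intro h
      exact ⟨fun i => Y i ω, fun i => ⟨rfl, h i⟩⟩
    · rintro ⟨y, hy⟩ i
      exact (hy i).2
  have hdisj : Pairwise (Function.onFun Disjoint fun y : Fin (n + 1) → Bool =>
      {ω | ∀ i : Fin (n + 1), Y i ω = y i ∧ X i ω ∈ A i}) := by
    intro y y' hne
    rw [Function.onFun, Set.disjoint_left]
    intro ω h1 h2
    apply hne
    funext i
    exact ((h1 i).1).symm.trans ((h2 i).1)
  have hterm : ∀ y : Fin (n + 1) → Bool,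
      μ {ω | ∀ i : Fin (n + 1), Y i ω = y i ∧ X i ω ∈ A i}
        = ∏ i : Fin (n + 1), (ENNReal.ofReal (P.initP (y i)) * P.emis (y i) (A i)) := by
    intro y
    rw [hfdd n y A hA]
    have h1 : P.initP (y 0) * ∏ i : Fin n, P.transP (y i.castSucc) (y i.succ)
        = ∏ i : Fin (n + 1), P.initP (y i) := by
      conv_rhs => rw [Fin.prod_univ_succ]
      congr 1
      exact Finset.prod_congr rfl fun i _ => htrans _ _
    rw [h1, ENNReal.ofReal_prod_of_nonneg (fun i _ => initP_nonneg P (y i)),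
      ← Finset.prod_mul_distrib]
  have hnu : ∀ B : Set (Fin d → ℝ),
      ∑ s : Bool, ENNReal.ofReal (P.initP s) * P.emis s B = nu P B := by
    intro B
    rw [Fintype.sum_bool, nu_apply]
    rfl
  rw [hset, measure_iUnion hdisj hmeas, tsum_fintype]
  calc ∑ y : Fin (n + 1) → Bool, μ {ω | ∀ i : Fin (n + 1), Y i ω = y i ∧ X i ω ∈ A i}
      = ∑ y : Fin (n + 1) → Bool,
          ∏ i : Fin (n + 1), (ENNReal.ofReal (P.initP (y i)) * P.emis (y i) (A i)) :=
        Finset.sum_congr rfl fun y _ => hterm y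
    _ = ∏ i : Fin (n + 1), ∑ s : Bool, ENNReal.ofReal (P.initP s) * P.emis s (A i) := by
        rw [Finset.prod_univ_sum]
        rw [Fintype.piFinset_univ]
    _ = ∏ i : Fin (n + 1), nu P (A i) := Finset.prod_congr rfl fun i _ => hnu (A i)

lemma run_formula (P : HMMParams d) {Ω : Type} [MeasurableSpace Ω]
    {μ : Measure Ω} {Y : ℕ → Ω → Bool} {X : ℕ → Ω → (Fin d → ℝ)}
    (hHMM : IsHMM P μ Y X) (hcase : P.paa = P.pba)
    (T : Set (Fin d → ℝ)) (hT : MeasurableSet T) (m K : ℕ) :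
    μ {ω | ∀ k ∈ Finset.range (K + 1), X (m + k) ω ∈ T} = nu P T ^ (K + 1) := by
  have hA : ∀ i : Fin (m + K + 1), MeasurableSet (if m ≤ (i : ℕ) then T else Set.univ) := by
    intro i
    split
    · exact hT
    · exact MeasurableSet.univ
  have hset : {ω | ∀ i : Fin (m + K + 1), X i ω ∈ (if m ≤ (i : ℕ) then T else Set.univ)}
      = {ω | ∀ k ∈ Finset.range (K + 1), X (m + k) ω ∈ T} := by
    ext ω
    simp only [Set.mem_setOf_eq, Finset.mem_range]
    constructor
    · intro h k hk
      have := h ⟨m + k, by omega⟩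
      simpa [Nat.le_add_right] using this
    · intro h i
      by_cases hm : m ≤ (i : ℕ)
      · have hlt := i.isLt
        have hk : (i : ℕ) - m < K + 1 := by omega
        have := h ((i : ℕ) - m) hk
        have hmk : m + ((i : ℕ) - m) = (i : ℕ) := by omega
        rw [hmk] at this
        simpa [hm] using this
      · simp [hm]
  have hprod : (∏ i : Fin (m + K + 1), nu P (if m ≤ (i : ℕ) then T else Set.univ))
      = nu P T ^ (K + 1) := by
    have hcg : ∀ i : Fin (m + K + 1), nu P (if m ≤ (i : ℕ) then T else Set.univ)
        = (if m ≤ (i : ℕ) then nu P T else 1) := by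
      intro i
      split
      · rfl
      · exact nu_univ P
    rw [Finset.prod_congr rfl (fun i _ => hcg i),
      Fin.prod_univ_eq_prod_range (fun j => if m ≤ j then nu P T else 1) (m + K + 1),
      Finset.range_eq_Ico,
      ← Finset.prod_Ico_consecutive _ (Nat.zero_le m) (by omega : m ≤ m + K + 1)]
    have e1 : (∏ j ∈ Finset.Ico 0 m, if m ≤ j then nu P T else 1) = 1 :=
      Finset.prod_eq_one fun j hj => if_neg (by have := (Finset.mem_Ico.mp hj).2; omega)
    have e2 : (∏ j ∈ Finset.Ico m (m + K + 1), if m ≤ j then nu P T else 1)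
        = nu P T ^ (K + 1) := by
      rw [Finset.prod_congr rfl (fun j hj => if_pos (Finset.mem_Ico.mp hj).1),
        Finset.prod_const, Nat.card_Ico]
      congr 1
      omega
    rw [e1, e2, one_mul]
  rw [← hset, prefix_formula P hHMM hcase (m + K) _ hA, hprod]

lemma point_formula (P : HMMParams d) {Ω : Type} [MeasurableSpace Ω]
    {μ : Measure Ω} {Y : ℕ → Ω → Bool} {X : ℕ → Ω → (Fin d → ℝ)}
    (hHMM : IsHMM P μ Y X) (hcase : P.paa = P.pba)
    (T : Set (Fin d → ℝ)) (hT : MeasurableSet T) (m : ℕ) :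
    μ ((X m) ⁻¹' T) = nu P T := by
  have h := run_formula P hHMM hcase T hT m 0
  have hset : {ω | ∀ k ∈ Finset.range 1, X (m + k) ω ∈ T} = (X m) ⁻¹' T := by
    ext ω
    simp [Finset.mem_range_succ_iff, Nat.le_zero]
  rw [hset] at h
  rw [h, pow_one]

end MeasureAux


section AeAux

lemma ae_infinite_mem (P : HMMParams d) {Ω : Type} [MeasurableSpace Ω]
    {μ : Measure Ω} {Y : ℕ → Ω → Bool} {X : ℕ → Ω → (Fin d → ℝ)}
    (hHMM : IsHMM P μ Y X) (hcase : P.paa = P.pba)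
    (S : Set (Fin d → ℝ)) (hS : MeasurableSet S) (hSpos : nu P S ≠ 0) :
    ∀ᵐ ω ∂μ, {u : ℕ | X u ω ∈ S}.Infinite := by
  haveI : IsProbabilityMeasure (nu P) := ⟨nu_univ P⟩
  have hcompl : nu P Sᶜ = 1 - nu P S := by
    rw [measure_compl hS (measure_ne_top (nu P) S), nu_univ P]
  have hr : nu P Sᶜ < 1 := by
    rw [hcompl]
    exact ENNReal.sub_lt_self ENNReal.one_ne_top one_ne_zero hSpos
  have hCm : ∀ m : ℕ, μ (⋂ u ∈ Set.Ici m, (X u) ⁻¹' Sᶜ) = 0 := by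
    intro m
    have hle : ∀ K : ℕ, μ (⋂ u ∈ Set.Ici m, (X u) ⁻¹' Sᶜ) ≤ nu P Sᶜ ^ (K + 1) := by
      intro K
      rw [← run_formula P hHMM hcase Sᶜ hS.compl m K]
      apply measure_mono
      intro ω hω
      rw [Set.mem_iInter₂] at hω
      intro k _
      exact hω (m + k) (Nat.le_add_right m k)
    have htend : Filter.Tendsto (fun K : ℕ => nu P Sᶜ ^ (K + 1)) Filter.atTop (nhds 0) :=
      (ENNReal.tendsto_pow_atTop_nhds_zero_of_lt_one hr).comp (Filter.tendsto_add_atTop_nat 1)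
    have := ge_of_tendsto' htend hle
    exact le_antisymm this zero_le
  rw [MeasureTheory.ae_iff]
  refine measure_mono_null ?_ (measure_iUnion_null hCm)
  intro ω hω
  rw [Set.mem_setOf_eq, Set.not_infinite] at hω
  obtain ⟨M, hM⟩ := hω.bddAbove
  refine Set.mem_iUnion.2 ⟨M + 1, Set.mem_iInter₂.2 fun u hu => ?_⟩
  intro hmem
  have h1 : u ≤ M := hM hmem
  have h2 : M + 1 ≤ u := hu
  omega

lemma ae_dens_pos (P : HMMParams d) {Ω : Type} [MeasurableSpace Ω]
    {μ : Measure Ω} {Y : ℕ → Ω → Bool} {X : ℕ → Ω → (Fin d → ℝ)}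
    (hHMM : IsHMM P μ Y X) (hcase : P.paa = P.pba) :
    ∀ᵐ ω ∂μ, ∀ u : ℕ, 0 < P.fa (X u ω) ∨ 0 < P.fb (X u ω) := by
  set Z : Set (Fin d → ℝ) := {x | P.fa x = 0 ∧ P.fb x = 0} with hZdef
  have hZ : MeasurableSet Z := by
    have h1 : MeasurableSet {x | P.fa x = 0} := P.fa_meas (measurableSet_singleton 0)
    have h2 : MeasurableSet {x | P.fb x = 0} := P.fb_meas (measurableSet_singleton 0)
    exact h1.inter h2
  have hnuZ : nu P Z = 0 := by
    have he : ∀ s : Bool, P.emis s Z = 0 := by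
      intro s
      rw [HMMParams.emis, withDensity_apply _ hZ]
      have : ∀ᵐ x ∂P.lam, x ∈ Z → ENNReal.ofReal (P.dens s x) = (0 : ENNReal) := by
        refine MeasureTheory.ae_of_all _ fun x hx => ?_
        cases s
        · show ENNReal.ofReal (P.fb x) = 0
          rw [hx.2, ENNReal.ofReal_zero]
        · show ENNReal.ofReal (P.fa x) = 0
          rw [hx.1, ENNReal.ofReal_zero]
      rw [MeasureTheory.setLIntegral_congr_fun_ae hZ this, lintegral_zero]
    rw [nu_apply, he true, he false, mul_zero, mul_zero, add_zero]
  have hpt : ∀ u : ℕ, μ ((X u) ⁻¹' Z) = 0 := fun u => by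
    rw [point_formula P hHMM hcase Z hZ u, hnuZ]
  rw [MeasureTheory.ae_iff]
  refine measure_mono_null ?_ (measure_iUnion_null hpt)
  intro ω hω
  rw [Set.mem_setOf_eq] at hω
  push_neg at hω
  obtain ⟨u, hu1, hu2⟩ := hω
  exact Set.mem_iUnion.2 ⟨u, ⟨le_antisymm hu1 (P.fa_nonneg _), le_antisymm hu2 (P.fb_nonneg _)⟩⟩

lemma lam_pos_aux {α : Type*} [MeasurableSpace α] (lam : Measure α)
    (f g : α → ℝ) (hf0 : ∀ x, 0 ≤ f x) (hg0 : ∀ x, 0 ≤ g x)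
    (hfint : Integrable f lam) (hgint : Integrable g lam)
    (hfi : ∫ x, f x ∂lam = 1) (hgi : ∫ x, g x ∂lam = 1)
    (hne : 0 < lam {x | f x ≠ g x}) (c1 c2 : ℝ) (hc1 : 0 < c1) (hc2 : 0 < c2)
    (h12 : c2 ≤ c1) : 0 < lam {x | c2 * g x < c1 * f x} := by
  by_contra hcon
  push_neg at hcon
  have h0 : lam {x | c2 * g x < c1 * f x} = 0 := le_antisymm hcon zero_le
  have hae : ∀ᵐ x ∂lam, c1 * f x ≤ c2 * g x := by
    rw [MeasureTheory.ae_iff]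
    convert h0 using 3
    ext x
    simp [not_le]
  have hle : c1 ≤ c2 := by
    have hmono := MeasureTheory.integral_mono_ae (hfint.const_mul c1) (hgint.const_mul c2) hae
    rwa [MeasureTheory.integral_const_mul, MeasureTheory.integral_const_mul, hfi, hgi,
      mul_one, mul_one] at hmono
  have hceq : c1 = c2 := le_antisymm hle h12
  have hfg : ∀ᵐ x ∂lam, f x ≤ g x := by
    filter_upwards [hae] with x hx
    rw [← hceq] at hx
    exact le_of_mul_le_mul_left hx hc1
  have hzero : ∫ x, (g x - f x) ∂lam = 0 := by
    rw [MeasureTheory.integral_sub hgint hfint, hfi, hgi, sub_self]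
  have hev := (MeasureTheory.integral_eq_zero_iff_of_nonneg_ae
    (hfg.mono fun x hx => by simp; linarith) (hgint.sub hfint)).mp hzero
  have heq : ∀ᵐ x ∂lam, f x = g x := by
    filter_upwards [hev] with x hx
    have hx' : g x - f x = 0 := hx
    linarith
  rw [MeasureTheory.ae_iff] at heq
  exact hne.ne' heq

lemma nu_gt_set_a (P : HMMParams d) (h : P.pib ≤ P.pia) :
    nu P {x | P.pib * P.fb x < P.pia * P.fa x} ≠ 0 := by
  set E := {x | P.pib * P.fb x < P.pia * P.fa x} with hEdef
  have hEm : MeasurableSet E :=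
    measurableSet_lt (P.fb_meas.const_mul _) (P.fa_meas.const_mul _)
  have hlamE : 0 < P.lam E :=
    lam_pos_aux P.lam P.fa P.fb P.fa_nonneg P.fb_nonneg (fa_integrable P) (fb_integrable P)
      P.fa_int P.fb_int P.emis_ne P.pia P.pib P.pia_pos P.pib_pos h
  have hemis : P.emis true E ≠ 0 := by
    show P.lam.withDensity (fun x => ENNReal.ofReal (P.fa x)) E ≠ 0
    rw [withDensity_apply _ hEm]
    intro h0
    rw [lintegral_eq_zero_iff (P.fa_meas.ennreal_ofReal)] at h0
    have hfalse : ∀ᵐ x ∂(P.lam.restrict E), False := by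
      filter_upwards [h0, MeasureTheory.ae_restrict_mem hEm] with x hx hxE
      have h1 : 0 < P.fa x := by
        have h2 : 0 ≤ P.pib * P.fb x := mul_nonneg P.pib_pos.le (P.fb_nonneg x)
        have h3 : P.pib * P.fb x < P.pia * P.fa x := hxE
        nlinarith [P.pia_pos]
      have hx' : ENNReal.ofReal (P.fa x) = 0 := hx
      exact absurd hx' (ENNReal.ofReal_pos.mpr h1).ne'
    rw [MeasureTheory.ae_iff] at hfalse
    simp only [not_false_eq_true, Set.setOf_true, Measure.restrict_apply_univ] at hfalse
    exact hlamE.ne' hfalse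
  rw [nu_apply]
  intro h0
  rw [add_eq_zero] at h0
  rcases mul_eq_zero.mp h0.1 with hc | hc
  · exact absurd hc (by simp [ENNReal.ofReal_eq_zero, not_le, P.pia_pos])
  · exact hemis hc

lemma nu_gt_set_b (P : HMMParams d) (h : P.pia ≤ P.pib) :
    nu P {x | P.pia * P.fa x < P.pib * P.fb x} ≠ 0 := by
  set E := {x | P.pia * P.fa x < P.pib * P.fb x} with hEdef
  have hEm : MeasurableSet E :=
    measurableSet_lt (P.fa_meas.const_mul _) (P.fb_meas.const_mul _)
  have hne' : 0 < P.lam {x | P.fb x ≠ P.fa x} := by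
    have : {x | P.fb x ≠ P.fa x} = {x | P.fa x ≠ P.fb x} := by
      ext x
      exact ne_comm
    rw [this]
    exact P.emis_ne
  have hlamE : 0 < P.lam E :=
    lam_pos_aux P.lam P.fb P.fa P.fb_nonneg P.fa_nonneg (fb_integrable P) (fa_integrable P)
      P.fb_int P.fa_int hne' P.pib P.pia P.pib_pos P.pia_pos h
  have hemis : P.emis false E ≠ 0 := by
    show P.lam.withDensity (fun x => ENNReal.ofReal (P.fb x)) E ≠ 0
    rw [withDensity_apply _ hEm]
    intro h0
    rw [lintegral_eq_zero_iff (P.fb_meas.ennreal_ofReal)] at h0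
    have hfalse : ∀ᵐ x ∂(P.lam.restrict E), False := by
      filter_upwards [h0, MeasureTheory.ae_restrict_mem hEm] with x hx hxE
      have h1 : 0 < P.fb x := by
        have h2 : 0 ≤ P.pia * P.fa x := mul_nonneg P.pia_pos.le (P.fa_nonneg x)
        have h3 : P.pia * P.fa x < P.pib * P.fb x := hxE
        nlinarith [P.pib_pos]
      have hx' : ENNReal.ofReal (P.fb x) = 0 := hx
      exact absurd hx' (ENNReal.ofReal_pos.mpr h1).ne'
    rw [MeasureTheory.ae_iff] at hfalse
    simp only [not_false_eq_true, Set.setOf_true, Measure.restrict_apply_univ] at hfalse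
    exact hlamE.ne' hfalse
  rw [nu_apply]
  intro h0
  rw [add_eq_zero] at h0
  rcases mul_eq_zero.mp h0.2 with hc | hc
  · exact absurd hc (by simp [ENNReal.ofReal_eq_zero, not_le, P.pib_pos])
  · exact hemis hc

end AeAux

/-- **Theorem 3 (case 3, the mixture model).** Suppose `p_aa = p_ba`. If `π_a ≥ π_b`, then
almost surely there are infinitely many strong `a`-nodes; if `π_b ≥ π_a`, almost surely
infinitely many strong `b`-nodes. -/
theorem theorem3_case3 {d : ℕ} (P : HMMParams d) {Ω : Type} [MeasurableSpace Ω]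
    (μ : Measure Ω) (Y : ℕ → Ω → Bool) (X : ℕ → Ω → (Fin d → ℝ))
    (hHMM : IsHMM P μ Y X) (hcase : P.paa = P.pba) :
    (P.pib ≤ P.pia →
      ∀ᵐ ω ∂μ, {u : ℕ | StrongANode P (fun i => X i ω) u}.Infinite) ∧
    (P.pia ≤ P.pib →
      ∀ᵐ ω ∂μ, {u : ℕ | StrongBNode P (fun i => X i ω) u}.Infinite) := by
  constructor
  · intro h
    have hEm : MeasurableSet {x | P.pib * P.fb x < P.pia * P.fa x} :=
      measurableSet_lt (P.fb_meas.const_mul _) (P.fa_meas.const_mul _)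
    have h2 := ae_infinite_mem P hHMM hcase _ hEm (nu_gt_set_a P h)
    filter_upwards [ae_dens_pos P hHMM hcase, h2] with ω hp hinf
    have hseteq : {u : ℕ | StrongANode P (fun i => X i ω) u}
        = {u : ℕ | X u ω ∈ {x | P.pib * P.fb x < P.pia * P.fa x}} := by
      ext u
      simp only [Set.mem_setOf_eq]
      exact strongA_iff P hcase (fun i => X i ω) hp u
    rw [hseteq]
    exact hinf
  · intro h
    have hEm : MeasurableSet {x | P.pia * P.fa x < P.pib * P.fb x} :=
      measurableSet_lt (P.fa_meas.const_mul _) (P.fb_meas.const_mul _)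
    have h2 := ae_infinite_mem P hHMM hcase _ hEm (nu_gt_set_b P h)
    filter_upwards [ae_dens_pos P hHMM hcase, h2] with ω hp hinf
    have hseteq : {u : ℕ | StrongBNode P (fun i => X i ω) u}
        = {u : ℕ | X u ω ∈ {x | P.pia * P.fa x < P.pib * P.fb x}} := by
      ext u
      simp only [Set.mem_setOf_eq]
      exact strongB_iff P hcase (fun i => X i ω) hp u
    rw [hseteq]
    exact hinf
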